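/- Let f : ℝ^d → ℝ be measurable and supported in a ball 2B = B(x₀, 2r), d ≥ 3, and suppose that M := sup_{y ∈ B(x₀,r), 0 < t < r} t^{2−σ} ( ⨍_{B(y,t)} |f|² )^{1/2} < ∞ for some σ ∈ (0,1). Then for every x ∈ B(x₀, r) and every s ∈ (0, r), ∫_{B(x, s)} |f(y)| / |x − y|^{d−2} dy ≤ C s^σ M, where C depends only on d and σ. -/

import Mathlib

open MeasureTheory Metric

theorem morrey_riesz_potential_bound (d : ℕ) (hd : 3 ≤ d) (σ : ℝ)
    (hσ0 : 0 < σ) (hσ1 : σ < 1) :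
    ∃ C : ℝ, 0 < C ∧
      ∀ (f : EuclideanSpace ℝ (Fin d) → ℝ) (x₀ : EuclideanSpace ℝ (Fin d)) (r M : ℝ),
        0 < r → Measurable f →
        (∀ y, y ∉ ball x₀ (2 * r) → f y = 0) →
        IntegrableOn (fun z => (f z) ^ 2) (ball x₀ (2 * r)) →
        (∀ y ∈ ball x₀ r, ∀ t : ℝ, 0 < t → t < r →
          t ^ (2 - σ) * Real.sqrt (⨍ z in ball y t, (f z) ^ 2) ≤ M) →
        ∀ x ∈ ball x₀ r, ∀ s : ℝ, 0 < s → s < r →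
          (∫ y in ball x s, |f y| / dist x y ^ ((d : ℝ) - 2)) ≤ C * s ^ σ * M := by
  classical
  haveI : NeZero d := ⟨by omega⟩
  set E := EuclideanSpace ℝ (Fin d)
  haveI : Nontrivial E := inferInstance
  set κ : ENNReal := volume (ball (0 : E) 1) with hκ
  have hκ0 : 0 < κ := measure_ball_pos volume 0 one_pos
  have hκtop : κ < ⊤ := measure_ball_lt_top
  have hκR : 0 < κ.toReal := ENNReal.toReal_pos hκ0.ne' hκtop.ne
  have hq0 : (0:ℝ) < 2 ^ (-σ) := Real.rpow_pos_of_pos two_pos _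
  have hq1 : (2:ℝ) ^ (-σ) < 1 := by
    apply Real.rpow_lt_one_of_one_lt_of_neg one_lt_two (by linarith)
  have hd2 : (0:ℝ) ≤ (d:ℝ) - 2 := by
    have : (3:ℝ) ≤ d := by exact_mod_cast hd
    linarith
  have hCpos : (0:ℝ) < 2 ^ ((d:ℝ) - 2) * κ.toReal * (1 - 2 ^ (-σ))⁻¹ :=
    mul_pos (mul_pos (Real.rpow_pos_of_pos two_pos _) hκR) (inv_pos.2 (by linarith))
  refine ⟨2 ^ ((d:ℝ) - 2) * κ.toReal * (1 - 2 ^ (-σ))⁻¹, hCpos, ?_⟩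
  intro f x₀ r M hr hf hsupp hfint havg x hx s hs0 hsr
  set C : ℝ := 2 ^ ((d:ℝ) - 2) * κ.toReal * (1 - 2 ^ (-σ))⁻¹ with hC
  have hC0 : 0 < C := hCpos
  -- M is nonnegative
  have hM : 0 ≤ M := by
    refine le_trans ?_ (havg x₀ (mem_ball_self hr) (r/2) (by linarith) (by linarith))
    positivity
  -- measurability of the integrand
  have hdistm : Measurable fun y : E => dist x y ^ ((d:ℝ) - 2) := by
    exact ((Real.continuous_rpow_const hd2).comp (continuous_const.dist continuous_id)).measurable
  have hgm : Measurable fun y : E => |f y| / dist x y ^ ((d:ℝ) - 2) := hf.abs.div hdistm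
  -- the key single-ball estimate
  have key : ∀ t : ℝ, 0 < t → t < r →
      ∫⁻ y in ball x t, ENNReal.ofReal |f y| ≤
        ENNReal.ofReal (M * t ^ (σ - 2) * t ^ d) * κ := by
    intro t ht0 htr
    have hsub : ball x t ⊆ ball x₀ (2 * r) := by
      intro y hy
      have h1 : dist y x < t := mem_ball.1 hy
      have h2 : dist x x₀ < r := mem_ball.1 hx
      have := dist_triangle y x x₀
      exact mem_ball.2 (by linarith)
    have hint : IntegrableOn (fun z => f z ^ 2) (ball x t) := hfint.mono_set hsub
    have hμpos : 0 < volume (ball x t) := measure_ball_pos volume x ht0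
    have hμtop : volume (ball x t) < ⊤ := measure_ball_lt_top
    have hμR : 0 < (volume (ball x t)).toReal := ENNReal.toReal_pos hμpos.ne' hμtop.ne
    -- bound the L² norm via the Morrey hypothesis
    have havg2 : ∫ z in ball x t, f z ^ 2 ≤
        (volume (ball x t)).toReal * (M * t ^ (σ - 2)) ^ 2 := by
      have h0 : 0 ≤ ∫ z in ball x t, f z ^ 2 :=
        setIntegral_nonneg measurableSet_ball (fun z _ => sq_nonneg _)
      have havg0 : (⨍ z in ball x t, f z ^ 2) =
          (volume (ball x t)).toReal⁻¹ * ∫ z in ball x t, f z ^ 2 := by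
        rw [setAverage_eq]; rfl
      have hA0 : 0 ≤ ⨍ z in ball x t, f z ^ 2 := by
        rw [havg0]; positivity
      have hsq : Real.sqrt (⨍ z in ball x t, f z ^ 2) ≤ M * t ^ (σ - 2) := by
        have h1 := havg x hx t ht0 (by linarith)
        have ht2 : (0:ℝ) < t ^ (2 - σ) := Real.rpow_pos_of_pos ht0 _
        have h2 : Real.sqrt (⨍ z in ball x t, f z ^ 2) ≤ M / t ^ (2 - σ) := by
          rw [le_div_iff₀ ht2]; linarith [h1]
        rw [div_eq_mul_inv, ← Real.rpow_neg ht0.le] at h2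
        simpa [neg_sub] using h2
      have hA : (⨍ z in ball x t, f z ^ 2) ≤ (M * t ^ (σ - 2)) ^ 2 := by
        have := Real.sq_sqrt hA0
        calc (⨍ z in ball x t, f z ^ 2) = Real.sqrt (⨍ z in ball x t, f z ^ 2) ^ 2 :=
              this.symm
          _ ≤ (M * t ^ (σ - 2)) ^ 2 := by
              apply pow_le_pow_left₀ (Real.sqrt_nonneg _) hsq
      calc ∫ z in ball x t, f z ^ 2
          = (volume (ball x t)).toReal * ⨍ z in ball x t, f z ^ 2 := by
            rw [havg0, ← mul_assoc, mul_inv_cancel₀ hμR.ne', one_mul]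
        _ ≤ (volume (ball x t)).toReal * (M * t ^ (σ - 2)) ^ 2 := by
            exact mul_le_mul_of_nonneg_left hA hμR.le
    -- Cauchy–Schwarz
    have hCS := ENNReal.lintegral_mul_le_Lp_mul_Lq (volume.restrict (ball x t))
      (Real.holderConjugate_iff.mpr ⟨one_lt_two, (by norm_num : (2:ℝ)⁻¹ + (2:ℝ)⁻¹ = 1)⟩)
      (f := fun y => ENNReal.ofReal |f y|) (g := fun _ => 1)
      (ENNReal.measurable_ofReal.comp hf.abs).aemeasurable aemeasurable_const
    simp only [Pi.mul_apply, mul_one, ENNReal.one_rpow, lintegral_const,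
      Measure.restrict_apply MeasurableSet.univ, Set.univ_inter, one_mul] at hCS
    have hL2 : (∫⁻ y in ball x t, ENNReal.ofReal |f y| ^ (2:ℝ)) =
        ENNReal.ofReal (∫ z in ball x t, f z ^ 2) := by
      rw [ofReal_integral_eq_lintegral_ofReal hint
        (Filter.Eventually.of_forall fun z => sq_nonneg _)]
      congr 1
      ext y
      rw [ENNReal.ofReal_rpow_of_nonneg (abs_nonneg _) (by norm_num)]
      congr 1
      rw [show (2:ℝ) = ((2:ℕ):ℝ) by norm_num, Real.rpow_natCast, sq_abs]
    have hstep : (∫⁻ y in ball x t, ENNReal.ofReal |f y| ^ (2:ℝ)) ^ ((1:ℝ)/2) ≤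
        ENNReal.ofReal (Real.sqrt ((volume (ball x t)).toReal) * (M * t ^ (σ - 2))) := by
      rw [hL2]
      have h1 : ENNReal.ofReal (∫ z in ball x t, f z ^ 2) ≤
          ENNReal.ofReal ((volume (ball x t)).toReal * (M * t ^ (σ - 2)) ^ 2) :=
        ENNReal.ofReal_le_ofReal havg2
      calc ENNReal.ofReal (∫ z in ball x t, f z ^ 2) ^ ((1:ℝ)/2)
          ≤ ENNReal.ofReal ((volume (ball x t)).toReal * (M * t ^ (σ - 2)) ^ 2) ^ ((1:ℝ)/2) := by
            exact ENNReal.rpow_le_rpow h1 (by norm_num)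
        _ = ENNReal.ofReal (((volume (ball x t)).toReal * (M * t ^ (σ - 2)) ^ 2) ^ ((1:ℝ)/2)) := by
            rw [ENNReal.ofReal_rpow_of_nonneg (by positivity) (by norm_num)]
        _ = ENNReal.ofReal (Real.sqrt ((volume (ball x t)).toReal) * (M * t ^ (σ - 2))) := by
            congr 1
            rw [← Real.sqrt_eq_rpow, Real.sqrt_mul ENNReal.toReal_nonneg,
              Real.sqrt_sq (by positivity)]
    have hhalf : ENNReal.ofReal (Real.sqrt ((volume (ball x t)).toReal)) =
        volume (ball x t) ^ ((1:ℝ)/2) := by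
      rw [Real.sqrt_eq_rpow, ENNReal.toReal_rpow, ENNReal.ofReal_toReal]
      exact (ENNReal.rpow_lt_top_of_nonneg (by norm_num) hμtop.ne).ne
    calc ∫⁻ y in ball x t, ENNReal.ofReal |f y|
        ≤ (∫⁻ y in ball x t, ENNReal.ofReal |f y| ^ (2:ℝ)) ^ ((1:ℝ)/2) *
            volume (ball x t) ^ ((1:ℝ)/2) := hCS
      _ ≤ ENNReal.ofReal (Real.sqrt ((volume (ball x t)).toReal) * (M * t ^ (σ - 2))) *
            volume (ball x t) ^ ((1:ℝ)/2) := by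
          exact mul_le_mul_left hstep _
      _ = ENNReal.ofReal (M * t ^ (σ - 2)) *
            (volume (ball x t) ^ ((1:ℝ)/2) * volume (ball x t) ^ ((1:ℝ)/2)) := by
          rw [ENNReal.ofReal_mul (Real.sqrt_nonneg _), hhalf]; ring
      _ = ENNReal.ofReal (M * t ^ (σ - 2)) * volume (ball x t) := by
          rw [← ENNReal.rpow_add _ _ hμpos.ne' hμtop.ne]
          norm_num
      _ = ENNReal.ofReal (M * t ^ (σ - 2) * t ^ d) * κ := by
          rw [Measure.addHaar_ball volume x ht0.le, finrank_euclideanSpace_fin, ← hκ,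
            ← mul_assoc, ← ENNReal.ofReal_mul
              (mul_nonneg hM (Real.rpow_pos_of_pos ht0 _).le)]
  -- dyadic annuli
  set T : ℕ → ℝ := fun j => s / 2 ^ j with hT
  have hTdef : ∀ j : ℕ, T j = s / 2 ^ j := fun _ => rfl
  have hT0 : ∀ j, 0 < T j := fun j => by positivity
  have hTanti : ∀ {j k : ℕ}, j ≤ k → T k ≤ T j := by
    intro j k hjk
    apply div_le_div_of_nonneg_left hs0.le (by positivity)
    exact pow_le_pow_right₀ one_le_two hjk
  have hTs : ∀ j, T j ≤ s := fun j => by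
    simpa [hTdef] using hTanti (Nat.zero_le j)
  have hTr : ∀ j, T j < r := fun j => lt_of_le_of_lt (hTs j) hsr
  set A : ℕ → Set E := fun j => ball x (T j) \ ball x (T (j+1)) with hA
  have hAmeas : ∀ j, MeasurableSet (A j) :=
    fun j => measurableSet_ball.diff measurableSet_ball
  have hAdisj : Pairwise (Function.onFun Disjoint A) := by
    rw [pairwise_disjoint_on]
    intro j k hjk
    rw [Set.disjoint_left]
    rintro y ⟨hy1, hy2⟩ ⟨hy3, hy4⟩
    apply hy2
    exact mem_ball.2 (lt_of_lt_of_le (mem_ball.1 hy3) (hTanti hjk))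
  have hAunion : ball x s \ ({x} : Set E) = ⋃ j, A j := by
    ext y
    simp only [Set.mem_diff, Set.mem_singleton_iff, Set.mem_iUnion, hA, mem_ball]
    constructor
    · rintro ⟨hys, hyx⟩
      have hdpos : 0 < dist y x := dist_pos.2 hyx
      have hP : ∃ j : ℕ, s ≤ dist y x * 2 ^ (j + 1) := by
        obtain ⟨n, hn⟩ := exists_nat_gt (s / dist y x)
        refine ⟨n, ?_⟩
        have h2n : (n:ℝ) ≤ 2 ^ (n+1) := by
          calc (n:ℝ) ≤ (2:ℝ) ^ n := by
                exact_mod_cast (n.lt_two_pow_self).le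
            _ ≤ 2 ^ (n+1) := by
                apply pow_le_pow_right₀ one_le_two (Nat.le_succ n)
        have : s / dist y x ≤ 2 ^ (n+1) := le_trans hn.le h2n
        calc s = s / dist y x * dist y x := by field_simp
          _ ≤ 2 ^ (n+1) * dist y x := by
              exact mul_le_mul_of_nonneg_right this hdpos.le
          _ = dist y x * 2 ^ (n+1) := by ring
      refine ⟨Nat.find hP, ?_, ?_⟩
      · -- dist y x < T (Nat.find hP)
        rcases Nat.eq_zero_or_pos (Nat.find hP) with h0 | hpos
        · rw [h0]; simpa [hTdef] using hys
        · have hne := Nat.find_min hP (Nat.sub_lt hpos one_pos)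
          push_neg at hne
          have : Nat.find hP - 1 + 1 = Nat.find hP := Nat.succ_pred_eq_of_pos hpos
          rw [this] at hne
          rw [hTdef, lt_div_iff₀ (by positivity)]
          linarith [hne]
      · -- ¬ dist y x < T (Nat.find hP + 1)
        have hspec := Nat.find_spec hP
        intro hcon
        rw [hTdef, lt_div_iff₀ (by positivity)] at hcon
        linarith
    · rintro ⟨j, hyj, hyj'⟩
      constructor
      · exact lt_of_lt_of_le hyj (hTs j)
      · intro hyx
        apply hyj'
        rw [hyx]
        simpa using hT0 (j+1)
  -- per-annulus estimate
  have hann : ∀ j : ℕ, ∫⁻ y in A j, ENNReal.ofReal (|f y| / dist x y ^ ((d:ℝ)-2)) ≤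
      ENNReal.ofReal ((M * 2 ^ ((d:ℝ)-2) * s ^ σ) * (2 ^ (-σ)) ^ j) * κ := by
    intro j
    have hj1 : 0 < T (j+1) := hT0 _
    have hstep1 : ∫⁻ y in A j, ENNReal.ofReal (|f y| / dist x y ^ ((d:ℝ)-2)) ≤
        ∫⁻ y in A j, ENNReal.ofReal (T (j+1) ^ (2-(d:ℝ))) * ENNReal.ofReal |f y| := by
      apply setLIntegral_mono
        ((ENNReal.measurable_ofReal.comp hf.abs).const_mul _)
      intro y hy
      simp only [Function.comp_apply]
      have hyd : T (j+1) ≤ dist y x := by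
        by_contra hcon
        exact hy.2 (mem_ball.2 (lt_of_not_ge hcon))
      have hyd' : T (j+1) ≤ dist x y := by rwa [dist_comm]
      have hpow : T (j+1) ^ ((d:ℝ)-2) ≤ dist x y ^ ((d:ℝ)-2) :=
        Real.rpow_le_rpow hj1.le hyd' hd2
      have hTp : 0 < T (j+1) ^ ((d:ℝ)-2) := Real.rpow_pos_of_pos hj1 _
      have hdivle : |f y| / dist x y ^ ((d:ℝ)-2) ≤ |f y| / T (j+1) ^ ((d:ℝ)-2) :=
        div_le_div_of_nonneg_left (abs_nonneg _) hTp hpow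
      rw [← ENNReal.ofReal_mul (by positivity)]
      apply ENNReal.ofReal_le_ofReal
      calc |f y| / dist x y ^ ((d:ℝ)-2) ≤ |f y| / T (j+1) ^ ((d:ℝ)-2) := hdivle
        _ = T (j+1) ^ (2-(d:ℝ)) * |f y| := by
            rw [div_eq_mul_inv, ← Real.rpow_neg hj1.le, neg_sub]
            ring
    have hstep2 : ∫⁻ y in A j, ENNReal.ofReal (T (j+1) ^ (2-(d:ℝ))) * ENNReal.ofReal |f y| =
        ENNReal.ofReal (T (j+1) ^ (2-(d:ℝ))) * ∫⁻ y in A j, ENNReal.ofReal |f y| :=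
      lintegral_const_mul _ (ENNReal.measurable_ofReal.comp hf.abs)
    have hstep3 : ∫⁻ y in A j, ENNReal.ofReal |f y| ≤
        ENNReal.ofReal (M * T j ^ (σ - 2) * T j ^ d) * κ :=
      le_trans (lintegral_mono_set Set.diff_subset) (key (T j) (hT0 j) (hTr j))
    calc ∫⁻ y in A j, ENNReal.ofReal (|f y| / dist x y ^ ((d:ℝ)-2))
        ≤ ENNReal.ofReal (T (j+1) ^ (2-(d:ℝ))) * ∫⁻ y in A j, ENNReal.ofReal |f y| := by
          rw [← hstep2]; exact hstep1
      _ ≤ ENNReal.ofReal (T (j+1) ^ (2-(d:ℝ))) *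
            (ENNReal.ofReal (M * T j ^ (σ - 2) * T j ^ d) * κ) :=
          mul_le_mul_right hstep3 _
      _ = ENNReal.ofReal (T (j+1) ^ (2-(d:ℝ)) * (M * T j ^ (σ - 2) * T j ^ d)) * κ := by
          rw [← mul_assoc, ← ENNReal.ofReal_mul (Real.rpow_pos_of_pos hj1 _).le]
      _ = ENNReal.ofReal ((M * 2 ^ ((d:ℝ)-2) * s ^ σ) * (2 ^ (-σ)) ^ j) * κ := by
          congr 1
          congr 1
          have htj : (0:ℝ) < T j := hT0 j
          have e1 : T (j+1) = T j / 2 := by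
            rw [hTdef, hTdef, pow_succ]; ring
          have e2 : T (j+1) ^ (2-(d:ℝ)) = T j ^ (2-(d:ℝ)) * 2 ^ ((d:ℝ)-2) := by
            rw [e1, Real.div_rpow htj.le (by norm_num), div_eq_mul_inv,
              ← Real.rpow_neg (by norm_num : (0:ℝ) ≤ 2), neg_sub]
          have e3 : T j ^ (2-(d:ℝ)) * (T j ^ (σ-2) * T j ^ (d:ℕ)) = T j ^ σ := by
            rw [← Real.rpow_natCast (T j) d, ← Real.rpow_add htj, ← Real.rpow_add htj]
            congr 1
            ring
          have e4 : T j ^ σ = s ^ σ * ((2:ℝ) ^ (-σ)) ^ j := by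
            rw [hTdef, Real.div_rpow hs0.le (by positivity),
              ← Real.rpow_natCast ((2:ℝ) ^ (-σ)) j,
              ← Real.rpow_mul (by norm_num : (0:ℝ) ≤ 2),
              ← Real.rpow_natCast (2:ℝ) j,
              ← Real.rpow_mul (by norm_num : (0:ℝ) ≤ 2),
              div_eq_mul_inv, ← Real.rpow_neg (by norm_num : (0:ℝ) ≤ 2)]
            congr 1
            ring
          calc T (j+1) ^ (2-(d:ℝ)) * (M * T j ^ (σ - 2) * T j ^ d)
              = M * 2 ^ ((d:ℝ)-2) * (T j ^ (2-(d:ℝ)) * (T j ^ (σ-2) * T j ^ (d:ℕ))) := by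
                rw [e2]; ring
            _ = M * 2 ^ ((d:ℝ)-2) * (s ^ σ * ((2:ℝ) ^ (-σ)) ^ j) := by rw [e3, e4]
            _ = (M * 2 ^ ((d:ℝ)-2) * s ^ σ) * (2 ^ (-σ)) ^ j := by ring
  -- assemble
  have hball : ∫⁻ y in ball x s, ENNReal.ofReal (|f y| / dist x y ^ ((d:ℝ)-2)) ≤
      ENNReal.ofReal (C * s ^ σ * M) := by
    have hae : (ball x s \ ({x} : Set E)) =ᵐ[volume] ball x s := by
      apply MeasureTheory.ae_eq_set.mpr
      constructor
      · refine measure_mono_null (t := ∅) (fun y hy => absurd hy.1.1 hy.2) measure_empty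
      · refine measure_mono_null (fun y hy => ?_) (measure_singleton x)
        by_contra hyx
        exact hy.2 ⟨hy.1, hyx⟩
    calc ∫⁻ y in ball x s, ENNReal.ofReal (|f y| / dist x y ^ ((d:ℝ)-2))
        = ∫⁻ y in ball x s \ ({x} : Set E), ENNReal.ofReal (|f y| / dist x y ^ ((d:ℝ)-2)) :=
          (setLIntegral_congr hae).symm
      _ = ∑' j, ∫⁻ y in A j, ENNReal.ofReal (|f y| / dist x y ^ ((d:ℝ)-2)) := by
          rw [hAunion]; exact lintegral_iUnion hAmeas hAdisj _
      _ ≤ ∑' j, ENNReal.ofReal ((M * 2 ^ ((d:ℝ)-2) * s ^ σ) * (2 ^ (-σ)) ^ j) * κ :=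
          ENNReal.tsum_le_tsum hann
      _ = ENNReal.ofReal (M * 2 ^ ((d:ℝ)-2) * s ^ σ) * κ *
            ∑' j, (ENNReal.ofReal (2 ^ (-σ))) ^ j := by
          rw [← ENNReal.tsum_mul_left]
          apply tsum_congr
          intro j
          rw [ENNReal.ofReal_mul (by positivity), ENNReal.ofReal_pow hq0.le]
          ring
      _ = ENNReal.ofReal (M * 2 ^ ((d:ℝ)-2) * s ^ σ) * κ *
            ENNReal.ofReal ((1 - 2 ^ (-σ))⁻¹) := by
          rw [ENNReal.tsum_geometric, ← ENNReal.ofReal_one, ← ENNReal.ofReal_sub _ hq0.le,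
            ENNReal.ofReal_inv_of_pos (by linarith)]
      _ = ENNReal.ofReal (C * s ^ σ * M) := by
          rw [← ENNReal.ofReal_toReal hκtop.ne, ← ENNReal.ofReal_mul (by positivity),
            ← ENNReal.ofReal_mul (by positivity)]
          congr 1
          rw [hC]
          ring
  have heq : (∫ y in ball x s, |f y| / dist x y ^ ((d:ℝ) - 2)) =
      (∫⁻ y in ball x s, ENNReal.ofReal (|f y| / dist x y ^ ((d:ℝ)-2))).toReal := by
    apply integral_eq_lintegral_of_nonneg_ae
    · exact Filter.Eventually.of_forall fun y => by positivity
    · exact hgm.aestronglyMeasurable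
  rw [heq]
  exact ENNReal.toReal_le_of_le_ofReal (by positivity) hball
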